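/- Let a,b,c,d ∈ ℝ with ad − bc = 1 and α ∈ ℂ with |α| = 1. Define scalar functions R₊(k) = (bk² + i(a−d)k + c)/(bk² + i(a+d)k − c), T₊(k) = 2iαk/(bk² + i(a+d)k − c), R₋(k) = (bk² + i(a−d)k + c)/(bk² − i(a+d)k − c), T₋(k) = −2i ᾱ k/(bk² − i(a+d)k − c). Then for all real k where the denominators are nonzero: T₊(k)T₋(k) + R₊(k)R₊(−k) = 1, T₋(k)T₊(k) + R₋(k)R₋(−k) = 1, T₊(k)R₋(k) + R₊(k)T₊(−k) = 0, and T₋(k)R₊(k) + R₋(k)T₋(−k) = 0. -/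

import Mathlib

open Complex

/-- The scalar reflection/transmission coefficients of the NLS defect model satisfy the
unitarity relations. -/
theorem nls_coeffs_unitarity (a b c d : ℝ) (habcd : a * d - b * c = 1)
    (α : ℂ) (hα : α * (starRingEnd ℂ) α = 1)
    (Rp Rm Tp Tm : ℝ → ℂ)
    (hRp : ∀ k : ℝ, Rp k = ((b : ℂ) * k ^ 2 + I * ((a : ℂ) - d) * k + c) /
        ((b : ℂ) * k ^ 2 + I * ((a : ℂ) + d) * k - c))
    (hTp : ∀ k : ℝ, Tp k = 2 * I * α * k /
        ((b : ℂ) * k ^ 2 + I * ((a : ℂ) + d) * k - c))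
    (hRm : ∀ k : ℝ, Rm k = ((b : ℂ) * k ^ 2 + I * ((a : ℂ) - d) * k + c) /
        ((b : ℂ) * k ^ 2 - I * ((a : ℂ) + d) * k - c))
    (hTm : ∀ k : ℝ, Tm k = -2 * I * (starRingEnd ℂ) α * k /
        ((b : ℂ) * k ^ 2 - I * ((a : ℂ) + d) * k - c))
    (k : ℝ)
    (hden1 : (b : ℂ) * k ^ 2 + I * ((a : ℂ) + d) * k - c ≠ 0)
    (hden2 : (b : ℂ) * k ^ 2 - I * ((a : ℂ) + d) * k - c ≠ 0) :
    Tp k * Tm k + Rp k * Rp (-k) = 1 ∧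
    Tm k * Tp k + Rm k * Rm (-k) = 1 ∧
    Tp k * Rm k + Rp k * Tp (-k) = 0 ∧
    Tm k * Rp k + Rm k * Tm (-k) = 0 := by
  have habcd' : (a:ℂ) * d - b * c = 1 := by exact_mod_cast habcd
  have hden2' : (b : ℂ) * k ^ 2 + -(I * ((a : ℂ) + d) * k) - c ≠ 0 := by
    rw [show (b : ℂ) * k ^ 2 + -(I * ((a : ℂ) + d) * k) - c
        = (b : ℂ) * k ^ 2 - I * ((a : ℂ) + d) * k - c by ring]
    exact hden2
  simp only [hRp, hTp, hRm, hTm]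
  push_cast
  refine ⟨?_, ?_, ?_, ?_⟩
  ·
    have n1 : (k:ℂ) * (k * b - I * (a + d)) - c ≠ 0 := fun h => hden2 (by linear_combination h)
    have n2 : (k:ℂ) * (k * b + -(I * (a + d))) - c ≠ 0 := fun h => hden2 (by linear_combination h)
    have n3 : (k:ℂ) * (k * b + I * (a + d)) - c ≠ 0 := fun h => hden1 (by linear_combination h)
    have n4 : (k:ℂ) * (k * b - -(I * (a + d))) - c ≠ 0 := fun h => hden1 (by linear_combination h)
    field_simp [hden2', n1, n2, n3, n4]
    linear_combination (-4*I^2*(k:ℂ)^2*(((b:ℂ)*k^2 - I*((a:ℂ)+d)*k - c))) * hα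
      + (4*I^2*(k:ℂ)^2*(((b:ℂ)*k^2 - I*((a:ℂ)+d)*k - c))) * habcd'
      + (4*(b:ℂ)*c*(k:ℂ)^2*(((b:ℂ)*k^2 - I*((a:ℂ)+d)*k - c))) * Complex.I_sq
  ·
    have n1 : (k:ℂ) * (k * b - I * (a + d)) - c ≠ 0 := fun h => hden2 (by linear_combination h)
    have n2 : (k:ℂ) * (k * b + -(I * (a + d))) - c ≠ 0 := fun h => hden2 (by linear_combination h)
    have n3 : (k:ℂ) * (k * b + I * (a + d)) - c ≠ 0 := fun h => hden1 (by linear_combination h)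
    have n4 : (k:ℂ) * (k * b - -(I * (a + d))) - c ≠ 0 := fun h => hden1 (by linear_combination h)
    field_simp [n1, n2, n3, n4]
    linear_combination (-4*I^2*(k:ℂ)^2*(((b:ℂ)*k^2 + I*((a:ℂ)+d)*k - c))) * hα
      + (4*I^2*(k:ℂ)^2*(((b:ℂ)*k^2 + I*((a:ℂ)+d)*k - c))) * habcd'
      + (4*(b:ℂ)*c*(k:ℂ)^2*(((b:ℂ)*k^2 + I*((a:ℂ)+d)*k - c))) * Complex.I_sq
  · field_simp [hden2']
    ring
  · field_simp
    ring
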